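/- The set M = {(x,y,z,1) ∈ ℝ⁴ : (x-1)²+y²+z²=1} ∪ {(x,y,z,1) ∈ ℝ⁴ : (x+1)²+y²+z²=1} (two unit spheres tangent at (0,0,0,1)) is not Lipschitz normally embedded: there is no constant C ≥ 1 with d_M(p,q) ≤ C‖p-q‖ for all p,q ∈ M. -/

import Mathlib

open Set Filter Metric

/-- Length of a path `γ : [0,1] → E` measured via the (extended) variation. -/
noncomputable def pathLength {E : Type*} [NormedAddCommGroup E] (γ : ℝ → E) : ENNReal :=
  eVariationOn γ (Set.Icc 0 1)

/-- `γ` is a path in `X` from `x` to `y`, parametrized on `[0,1]`. -/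
def IsPathIn {E : Type*} [NormedAddCommGroup E] (X : Set E) (x y : E) (γ : ℝ → E) : Prop :=
  ContinuousOn γ (Set.Icc 0 1) ∧ Set.MapsTo γ (Set.Icc 0 1) X ∧ γ 0 = x ∧ γ 1 = y

/-- The inner (length) distance on `X`: the infimum of the lengths of paths in `X`
joining `x` to `y`. -/
noncomputable def innerDist {E : Type*} [NormedAddCommGroup E] (X : Set E) (x y : E) : ENNReal :=
  ⨅ γ ∈ {γ : ℝ → E | IsPathIn X x y γ}, pathLength γ

/-- Points of `ℝ⁴` from four coordinates. -/
noncomputable def mk4 (a b c d : ℝ) : EuclideanSpace ℝ (Fin 4) :=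
  (WithLp.equiv 2 (Fin 4 → ℝ)).symm ![a, b, c, d]

/-- The union of the two unit spheres in the hyperplane `{t = 1} ⊆ ℝ⁴` centered at
`(±1, 0, 0, 1)`, tangent at `(0,0,0,1)`. -/
def M4 : Set (EuclideanSpace ℝ (Fin 4)) :=
  {p | p 3 = 1 ∧ ((p 0 - 1) ^ 2 + (p 1) ^ 2 + (p 2) ^ 2 = 1 ∨
    (p 0 + 1) ^ 2 + (p 1) ^ 2 + (p 2) ^ 2 = 1)}

set_option maxHeartbeats 1000000 in
/-- the two tangent spheres `M ⊆ ℝ⁴` are not Lipschitz normally embedded. -/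
theorem stmt10 :
    ¬ ∃ C : ℝ, 1 ≤ C ∧ ∀ p ∈ M4, ∀ q ∈ M4,
      innerDist M4 p q ≤ ENNReal.ofReal (C * ‖p - q‖) := by
  rintro ⟨C, hC, h⟩
  have hC0 : (0:ℝ) < C := lt_of_lt_of_le one_pos hC
  set s : ℝ := C⁻¹ ^ 2 with hs_def
  have hs0 : 0 < s := by positivity
  have hs1 : s ≤ 1 := by
    rw [hs_def, inv_pow]
    have : (1:ℝ) ≤ C ^ 2 := by nlinarith
    exact inv_le_one_of_one_le₀ this
  have hy0 : (0:ℝ) ≤ 2*s - s^2 := by nlinarith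
  set y : ℝ := Real.sqrt (2*s - s^2) with hy_def
  have hy2 : y^2 = 2*s - s^2 := Real.sq_sqrt hy0
  have hpM : mk4 s y 0 1 ∈ M4 := by
    refine ⟨rfl, Or.inl ?_⟩
    show (s - 1)^2 + y^2 + (0:ℝ)^2 = 1
    nlinarith
  have hqM : mk4 (-s) y 0 1 ∈ M4 := by
    refine ⟨rfl, Or.inr ?_⟩
    show (-s + 1)^2 + y^2 + (0:ℝ)^2 = 1
    nlinarith
  -- norm of p - q
  have hpq : mk4 s y 0 1 - mk4 (-s) y 0 1 = mk4 (2*s) 0 0 0 := by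
    ext i; fin_cases i <;> simp [mk4] <;> ring
  have hnorm : ‖mk4 s y 0 1 - mk4 (-s) y 0 1‖ = 2*s := by
    rw [hpq, EuclideanSpace.norm_eq]
    simp [mk4, Fin.sum_univ_four]
    rw [Real.sqrt_sq (by positivity)]
  -- norms to the origin
  have hpo : ‖mk4 s y 0 1 - mk4 0 0 0 1‖ = Real.sqrt (2*s) := by
    have : mk4 s y 0 1 - mk4 0 0 0 1 = mk4 s y 0 0 := by
      ext i; fin_cases i <;> simp [mk4]
    rw [this, EuclideanSpace.norm_eq]
    simp only [mk4, WithLp.equiv_symm_apply, PiLp.toLp_apply, Fin.sum_univ_four]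
    simp only [Real.norm_eq_abs, sq_abs, norm_zero, Matrix.cons_val_zero,
      Matrix.cons_val_one, Matrix.head_cons, Matrix.cons_val_two, Matrix.tail_cons,
      Matrix.cons_val_three, neg_sq]
    rw [hy2]; congr 1; ring
  have hoq : ‖mk4 0 0 0 1 - mk4 (-s) y 0 1‖ = Real.sqrt (2*s) := by
    have : mk4 0 0 0 1 - mk4 (-s) y 0 1 = mk4 s (-y) 0 0 := by
      ext i; fin_cases i <;> simp [mk4]
    rw [this, EuclideanSpace.norm_eq]
    simp only [mk4, WithLp.equiv_symm_apply, PiLp.toLp_apply, Fin.sum_univ_four]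
    simp only [Real.norm_eq_abs, sq_abs, norm_zero, Matrix.cons_val_zero,
      Matrix.cons_val_one, Matrix.head_cons, Matrix.cons_val_two, Matrix.tail_cons,
      Matrix.cons_val_three, neg_sq]
    rw [hy2]; congr 1; ring
  -- lower bound for the inner distance
  have key : ENNReal.ofReal (2 * Real.sqrt (2*s)) ≤
      innerDist M4 (mk4 s y 0 1) (mk4 (-s) y 0 1) := by
    refine le_iInf₂ fun γ hγ => ?_
    obtain ⟨hcont, hmaps, h0, h1⟩ := hγ
    have hf : ContinuousOn (fun t => γ t 0) (Icc 0 1) :=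
      (EuclideanSpace.proj (0:Fin 4)).continuous.comp_continuousOn hcont
    obtain ⟨t, ht, hft⟩ : ∃ t ∈ Icc (0:ℝ) 1, γ t 0 = 0 := by
      have hIVT := intermediate_value_Icc' (by norm_num : (0:ℝ) ≤ 1) hf
      have h0mem : (0:ℝ) ∈ Icc ((fun t => γ t 0) 1) ((fun t => γ t 0) 0) := by
        simp only [h0, h1]
        constructor
        · show -s ≤ 0; linarith
        · show (0:ℝ) ≤ s; linarith
      obtain ⟨t, ht, hft⟩ := hIVT h0mem
      exact ⟨t, ht, hft⟩
    have hmem := hmaps ht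
    have hto : γ t = mk4 0 0 0 1 := by
      obtain ⟨h3, hsph⟩ := hmem
      have h1z : γ t 1 = 0 ∧ γ t 2 = 0 := by
        rcases hsph with hsph | hsph <;>
          (rw [hft] at hsph;
           exact ⟨by nlinarith [sq_nonneg (γ t 1), sq_nonneg (γ t 2)],
                  by nlinarith [sq_nonneg (γ t 1), sq_nonneg (γ t 2)]⟩)
      ext i; fin_cases i
      · exact hft
      · exact h1z.1
      · exact h1z.2
      · exact h3
    have hsplit := eVariationOn.Icc_add_Icc γ (s := Icc (0:ℝ) 1) ht.1 ht.2 ht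
    have e1 : edist (γ 0) (γ t) ≤ eVariationOn γ (Icc (0:ℝ) 1 ∩ Icc 0 t) :=
      eVariationOn.edist_le γ ⟨⟨le_rfl, by norm_num⟩, ⟨le_rfl, ht.1⟩⟩
        ⟨ht, ⟨ht.1, le_rfl⟩⟩
    have e2 : edist (γ t) (γ 1) ≤ eVariationOn γ (Icc (0:ℝ) 1 ∩ Icc t 1) :=
      eVariationOn.edist_le γ ⟨ht, ⟨le_rfl, ht.2⟩⟩
        ⟨⟨by norm_num, le_rfl⟩, ⟨ht.2, le_rfl⟩⟩
    have hsum : edist (γ 0) (γ t) + edist (γ t) (γ 1) ≤ pathLength γ := by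
      calc edist (γ 0) (γ t) + edist (γ t) (γ 1)
          ≤ eVariationOn γ (Icc (0:ℝ) 1 ∩ Icc 0 t) + eVariationOn γ (Icc (0:ℝ) 1 ∩ Icc t 1) :=
            add_le_add e1 e2
        _ = eVariationOn γ (Icc (0:ℝ) 1 ∩ Icc 0 1) := hsplit
        _ = pathLength γ := by rw [inter_self]; rfl
    refine le_trans ?_ hsum
    rw [h0, h1, hto]
    rw [edist_dist, edist_dist, dist_eq_norm, dist_eq_norm, hpo, hoq,
      ← ENNReal.ofReal_add (Real.sqrt_nonneg _) (Real.sqrt_nonneg _)]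
    apply le_of_eq
    congr 1
    ring
  have hle := h _ hpM _ hqM
  rw [hnorm] at hle
  have hfin := key.trans hle
  rw [ENNReal.ofReal_le_ofReal_iff (by positivity)] at hfin
  -- hfin : 2 * Real.sqrt (2*s) ≤ C * (2*s)
  have hsq : Real.sqrt (2*s) = Real.sqrt 2 / C := by
    rw [show 2*s = (Real.sqrt 2 / C)^2 by
      rw [div_pow, Real.sq_sqrt (by norm_num : (0:ℝ) ≤ 2), hs_def, inv_pow]
      field_simp]
    exact Real.sqrt_sq (by positivity)
  have h2 : (1:ℝ) < Real.sqrt 2 := by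
    rw [show (1:ℝ) = Real.sqrt 1 by simp]
    exact Real.sqrt_lt_sqrt (by norm_num) (by norm_num)
  rw [hsq, hs_def, inv_pow] at hfin
  have hC2 : (0:ℝ) < C^2 := by positivity
  have h3 : 2 * (Real.sqrt 2 / C) = 2 * Real.sqrt 2 / C := by ring
  have h4 : C * (2 * (C ^ 2)⁻¹) = 2 / C := by field_simp
  rw [h3, h4, div_le_div_iff₀ hC0 hC0] at hfin
  nlinarith
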